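/- Let G be a finite simple graph with an orientation of its edges and triangles. The Helmholtzian matrix H(G) is reducible if and only if there is a partition of the edge set E = E₁ ∪ E₂ into two non-empty parts such that for every pair of edges e₁ ∈ E₁ and e₂ ∈ E₂, either e₁ and e₂ lie in a common triangle of G, or e₁ and e₂ share no endpoint. -/

import Mathlib

open scoped Classical
open scoped Matrix

namespace HelmPaper

variable {V : Type} [Fintype V] [DecidableEq V]

/-- The set of triangles of `G`, i.e. the 3-element cliques of `G`. -/
abbrev Triangle (G : SimpleGraph V) : Type :=
  {s : Finset V // s.card = 3 ∧ G.IsClique (s : Set V)}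

/-- An orientation of the edges of `G`: each edge `e` gets a head `e⁺` and a tail `e⁻`. -/
structure Orientation (G : SimpleGraph V) where
  head : G.edgeSet → V
  tail : G.edgeSet → V
  consistent : ∀ e : G.edgeSet, (e : Sym2 V) = s(head e, tail e)

/-- A cyclic orientation of each triangle of `G`, recorded by a representative ordered
triple of its three vertices. -/
structure TriOrientation (G : SimpleGraph V) where
  fst : Triangle G → V
  snd : Triangle G → V
  trd : Triangle G → V
  consistent : ∀ t : Triangle G, ({fst t, snd t, trd t} : Finset V) = t.val

/-- The edge-vertex incidence matrix `B`. -/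
noncomputable def bMat (G : SimpleGraph V) (o : Orientation G) : Matrix G.edgeSet V ℝ :=
  fun e v => if v = o.head e then 1 else if v = o.tail e then -1 else 0

/-- The oriented edge `e` agrees with the cyclic orientation of the triangle `t`. -/
def Agrees {G : SimpleGraph V} (o : Orientation G) (τ : TriOrientation G)
    (e : G.edgeSet) (t : Triangle G) : Prop :=
  (o.tail e = τ.fst t ∧ o.head e = τ.snd t) ∨
  (o.tail e = τ.snd t ∧ o.head e = τ.trd t) ∨
  (o.tail e = τ.trd t ∧ o.head e = τ.fst t)

/-- The oriented edge `e` disagrees with the cyclic orientation of the triangle `t`. -/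
def Disagrees {G : SimpleGraph V} (o : Orientation G) (τ : TriOrientation G)
    (e : G.edgeSet) (t : Triangle G) : Prop :=
  (o.head e = τ.fst t ∧ o.tail e = τ.snd t) ∨
  (o.head e = τ.snd t ∧ o.tail e = τ.trd t) ∨
  (o.head e = τ.trd t ∧ o.tail e = τ.fst t)

/-- The triangle-edge incidence matrix `C`. -/
noncomputable def cMat (G : SimpleGraph V) (o : Orientation G) (τ : TriOrientation G) :
    Matrix (Triangle G) G.edgeSet ℝ :=
  fun t e => if Agrees o τ e t then 1 else if Disagrees o τ e t then -1 else 0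

/-- The Helmholtzian matrix `H(G) = B Bᵀ + Cᵀ C`. -/
noncomputable def helm (G : SimpleGraph V) (o : Orientation G) (τ : TriOrientation G) :
    Matrix G.edgeSet G.edgeSet ℝ :=
  bMat G o * (bMat G o)ᵀ + (cMat G o τ)ᵀ * cMat G o τ

/-- The edge `e` (as an unordered pair of vertices) lies in the triangle `t`. -/
def EdgeInTri (G : SimpleGraph V) (e : Sym2 V) (t : Triangle G) : Prop :=
  ∀ v ∈ e, v ∈ t.val

/-- The triangle degree `△(e)`: the number of triangles of `G` containing the edge `e`. -/
noncomputable def triDeg (G : SimpleGraph V) (e : Sym2 V) : ℕ :=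
  (Finset.univ.filter fun t : Triangle G => EdgeInTri G e t).card

/-- A square matrix is *reducible* if some simultaneous permutation of its rows and
columns puts it in block diagonal form with two non-trivial square diagonal blocks. -/
def MatReducible {α : Type} [Fintype α] [DecidableEq α] (M : Matrix α α ℝ) : Prop :=
  ∃ (p q : ℕ), 0 < p ∧ 0 < q ∧
    ∃ (σ : α ≃ (Fin p ⊕ Fin q)) (A : Matrix (Fin p) (Fin p) ℝ)
      (D : Matrix (Fin q) (Fin q) ℝ),
      Matrix.reindex σ σ M = Matrix.fromBlocks A 0 0 D

set_option linter.unusedSectionVars false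
set_option linter.unreachableTactic false
set_option linter.unusedTactic false

section Lemmas
variable {G : SimpleGraph V} (o : Orientation G) (τ : TriOrientation G)

lemma card3_distinct {a b c : V} (h : ({a, b, c} : Finset V).card = 3) :
    a ≠ b ∧ a ≠ c ∧ b ≠ c := by
  have key : ∀ u v : V, ({u, v} : Finset V).card ≤ 2 :=
    fun u v => le_trans (Finset.card_insert_le _ _) (by simp)
  refine ⟨?_, ?_, ?_⟩ <;> rintro rfl
  · have hsub : ({a, a, c} : Finset V) ⊆ {a, c} := by
      intro x hx; simp at hx ⊢; tauto
    have := le_trans (Finset.card_le_card hsub) (key a c); omega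
  · have hsub : ({a, b, a} : Finset V) ⊆ {a, b} := by
      intro x hx; simp at hx ⊢; tauto
    have := le_trans (Finset.card_le_card hsub) (key a b); omega
  · have hsub : ({a, b, b} : Finset V) ⊆ {a, b} := by
      intro x hx; simp at hx ⊢; tauto
    have := le_trans (Finset.card_le_card hsub) (key a b); omega

lemma head_ne_tail (e : G.edgeSet) : o.head e ≠ o.tail e := by
  have h := e.2
  rw [o.consistent e, SimpleGraph.mem_edgeSet] at h
  exact h.ne

lemma mem_edge_iff (e : G.edgeSet) (v : V) :
    v ∈ (e : Sym2 V) ↔ v = o.head e ∨ v = o.tail e := by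
  rw [o.consistent e, Sym2.mem_iff]

lemma tri_distinct (t : Triangle G) :
    τ.fst t ≠ τ.snd t ∧ τ.fst t ≠ τ.trd t ∧ τ.snd t ≠ τ.trd t := by
  have h := τ.consistent t
  have hc : ({τ.fst t, τ.snd t, τ.trd t} : Finset V).card = 3 := by rw [h]; exact t.2.1
  exact card3_distinct hc

lemma fst_mem (t : Triangle G) : τ.fst t ∈ t.val := by
  rw [← τ.consistent t]; simp
lemma snd_mem (t : Triangle G) : τ.snd t ∈ t.val := by
  rw [← τ.consistent t]; simp
lemma trd_mem (t : Triangle G) : τ.trd t ∈ t.val := by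
  rw [← τ.consistent t]; simp

lemma edgeInTri_iff (e : G.edgeSet) (t : Triangle G) :
    EdgeInTri G (e : Sym2 V) t ↔ o.head e ∈ t.val ∧ o.tail e ∈ t.val := by
  constructor
  · intro h
    exact ⟨h _ ((mem_edge_iff o e _).2 (Or.inl rfl)), h _ ((mem_edge_iff o e _).2 (Or.inr rfl))⟩
  · rintro ⟨h1, h2⟩ v hv
    rcases (mem_edge_iff o e v).1 hv with rfl | rfl
    · exact h1
    · exact h2

end Lemmas

section Lemmas2
variable {G : SimpleGraph V} (o : Orientation G) (τ : TriOrientation G)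

lemma mem_tri_cases {v : V} (t : Triangle G) (h : v ∈ t.val) :
    v = τ.fst t ∨ v = τ.snd t ∨ v = τ.trd t := by
  rw [← τ.consistent t] at h; simpa using h

lemma bb_apply (e f : G.edgeSet) :
    (bMat G o * (bMat G o)ᵀ) e f = bMat G o f (o.head e) - bMat G o f (o.tail e) := by
  rw [Matrix.mul_apply]
  have hne := head_ne_tail o e
  have key : ∀ v : V, bMat G o e v * (bMat G o)ᵀ v f =
      (if v = o.head e then bMat G o f v else 0) + (if v = o.tail e then -(bMat G o f v) else 0) := by
    intro v
    simp only [bMat, Matrix.transpose_apply]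
    split_ifs with h1 h2 h2 <;> simp_all <;> ring
  rw [Finset.sum_congr rfl fun v _ => key v, Finset.sum_add_distrib]
  rw [Finset.sum_ite_eq' Finset.univ (o.head e), Finset.sum_ite_eq' Finset.univ (o.tail e)]
  simp [sub_eq_add_neg]

lemma edgeInTri_of_cMat_ne (e : G.edgeSet) (t : Triangle G) (h : cMat G o τ t e ≠ 0) :
    EdgeInTri G (e : Sym2 V) t := by
  rw [edgeInTri_iff o]
  unfold cMat at h
  split_ifs at h with h1 h2
  · rcases h1 with ⟨ht, hh⟩ | ⟨ht, hh⟩ | ⟨ht, hh⟩ <;>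
      exact ⟨by rw [hh]; first | exact fst_mem τ t | exact snd_mem τ t | exact trd_mem τ t,
             by rw [ht]; first | exact fst_mem τ t | exact snd_mem τ t | exact trd_mem τ t⟩
  · rcases h2 with ⟨hh, ht⟩ | ⟨hh, ht⟩ | ⟨hh, ht⟩ <;>
      exact ⟨by rw [hh]; first | exact fst_mem τ t | exact snd_mem τ t | exact trd_mem τ t,
             by rw [ht]; first | exact fst_mem τ t | exact snd_mem τ t | exact trd_mem τ t⟩
  · exact absurd rfl h

lemma cancel (e f : G.edgeSet) (hef : e ≠ f) (t : Triangle G)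
    (he : EdgeInTri G (e : Sym2 V) t) (hf : EdgeInTri G (f : Sym2 V) t) :
    cMat G o τ t e * cMat G o τ t f = -(bMat G o f (o.head e) - bMat G o f (o.tail e)) := by
  obtain ⟨hxy, hxz, hyz⟩ := tri_distinct τ t
  have hyx := hxy.symm
  have hzx := hxz.symm
  have hzy := hyz.symm
  have hete := head_ne_tail o e
  have hfte := head_ne_tail o f
  have hne : s(o.head e, o.tail e) ≠ s(o.head f, o.tail f) := by
    rw [← o.consistent, ← o.consistent]
    exact fun h => hef (Subtype.ext h)
  obtain ⟨he1, he2⟩ := (edgeInTri_iff o e t).1 he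
  obtain ⟨hf1, hf2⟩ := (edgeInTri_iff o f t).1 hf
  have c1 := mem_tri_cases τ t he1
  have c2 := mem_tri_cases τ t he2
  have c3 := mem_tri_cases τ t hf1
  have c4 := mem_tri_cases τ t hf2
  rcases c1 with h1|h1|h1 <;> rcases c2 with h2|h2|h2 <;>
    rcases c3 with h3|h3|h3 <;> rcases c4 with h4|h4|h4 <;>
    simp_all [cMat, bMat, Agrees, Disagrees, Sym2.eq_iff] <;> norm_num

end Lemmas2

section Lemmas3
variable {G : SimpleGraph V} (o : Orientation G) (τ : TriOrientation G)

lemma sym2_ne (e f : G.edgeSet) (hef : e ≠ f) :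
    s(o.head e, o.tail e) ≠ s(o.head f, o.tail f) := by
  rw [← o.consistent, ← o.consistent]
  exact fun h => hef (Subtype.ext h)

lemma common_tri_unique (o : Orientation G) (e f : G.edgeSet) (hef : e ≠ f) {t t' : Triangle G}
    (het : EdgeInTri G (e : Sym2 V) t) (hft : EdgeInTri G (f : Sym2 V) t)
    (het' : EdgeInTri G (e : Sym2 V) t') (hft' : EdgeInTri G (f : Sym2 V) t') :
    t = t' := by
  have hete := head_ne_tail o e
  have hftf := head_ne_tail o f
  have hne := sym2_ne o e f hef
  set S : Finset V := {o.head e, o.tail e, o.head f, o.tail f} with hS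
  have hsub : ∀ t'' : Triangle G, EdgeInTri G (e : Sym2 V) t'' →
      EdgeInTri G (f : Sym2 V) t'' → S ⊆ t''.val := by
    intro t'' h1 h2
    obtain ⟨a1, a2⟩ := (edgeInTri_iff o e t'').1 h1
    obtain ⟨b1, b2⟩ := (edgeInTri_iff o f t'').1 h2
    intro x hx
    simp only [hS, Finset.mem_insert, Finset.mem_singleton] at hx
    rcases hx with rfl|rfl|rfl|rfl <;> assumption
  have hcard : 3 ≤ S.card := by
    by_contra hlt
    push_neg at hlt
    have hp : ({o.head e, o.tail e} : Finset V) ⊆ S := by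
      intro x hx; simp only [hS, Finset.mem_insert, Finset.mem_singleton] at hx ⊢; tauto
    have hcp : ({o.head e, o.tail e} : Finset V).card = 2 := Finset.card_pair hete
    have hSeq : ({o.head e, o.tail e} : Finset V) = S :=
      Finset.eq_of_subset_of_card_le hp (by omega)
    have hq : ({o.head f, o.tail f} : Finset V) ⊆ ({o.head e, o.tail e} : Finset V) := by
      rw [hSeq]; intro x hx
      simp only [hS, Finset.mem_insert, Finset.mem_singleton] at hx ⊢; tauto
    have h1 : o.head f ∈ ({o.head e, o.tail e} : Finset V) := hq (by simp)
    have h2 : o.tail f ∈ ({o.head e, o.tail e} : Finset V) := hq (by simp)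
    simp only [Finset.mem_insert, Finset.mem_singleton] at h1 h2
    apply hne
    rw [Sym2.eq_iff]
    rcases h1 with h1|h1 <;> rcases h2 with h2|h2
    · exact absurd (h1.trans h2.symm) hftf
    · exact Or.inl ⟨h1.symm, h2.symm⟩
    · exact Or.inr ⟨h2.symm, h1.symm⟩
    · exact absurd (h1.trans h2.symm) hftf
  have hval : ∀ t'' : Triangle G, EdgeInTri G (e : Sym2 V) t'' →
      EdgeInTri G (f : Sym2 V) t'' → t''.val = S := by
    intro t'' h1 h2
    exact (Finset.eq_of_subset_of_card_le (hsub t'' h1 h2) (by rw [t''.2.1]; omega)).symm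
  exact Subtype.ext ((hval t het hft).trans (hval t' het' hft').symm)

lemma cc_apply (e f : G.edgeSet) :
    ((cMat G o τ)ᵀ * cMat G o τ) e f = ∑ t : Triangle G, cMat G o τ t e * cMat G o τ t f := by
  rw [Matrix.mul_apply]
  simp [Matrix.transpose_apply]

lemma helm_apply (e f : G.edgeSet) :
    helm G o τ e f = (bMat G o f (o.head e) - bMat G o f (o.tail e)) +
      ∑ t : Triangle G, cMat G o τ t e * cMat G o τ t f := by
  rw [helm, Matrix.add_apply, bb_apply, cc_apply]

lemma helm_eq_zero_of_common (e f : G.edgeSet) (hef : e ≠ f) (t : Triangle G)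
    (he : EdgeInTri G (e : Sym2 V) t) (hf : EdgeInTri G (f : Sym2 V) t) :
    helm G o τ e f = 0 := by
  rw [helm_apply]
  have hsum : ∑ t' : Triangle G, cMat G o τ t' e * cMat G o τ t' f =
      cMat G o τ t e * cMat G o τ t f := by
    apply Finset.sum_eq_single
    · intro t' _ hne
      by_contra hterm
      have h1 : cMat G o τ t' e ≠ 0 := fun h => hterm (by rw [h]; ring)
      have h2 : cMat G o τ t' f ≠ 0 := fun h => hterm (by rw [h]; ring)
      exact hne (common_tri_unique o e f hef (edgeInTri_of_cMat_ne o τ e t' h1)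
        (edgeInTri_of_cMat_ne o τ f t' h2) he hf)
    · intro h; exact absurd (Finset.mem_univ t) h
  rw [hsum, cancel o τ e f hef t he hf]
  ring

lemma no_common_of_noshare (o : Orientation G) (τ : TriOrientation G) (e f : G.edgeSet)
    (h : ¬∃ v : V, v ∈ (e : Sym2 V) ∧ v ∈ (f : Sym2 V))
    (t : Triangle G) (he : EdgeInTri G (e : Sym2 V) t) (hf : EdgeInTri G (f : Sym2 V) t) :
    False := by
  have h' : ∀ v : V, v ∈ (e : Sym2 V) → v ∉ (f : Sym2 V) := by
    intro v h1 h2; exact h ⟨v, h1, h2⟩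
  have h11 : o.head e ≠ o.head f := fun hh => h' _ ((mem_edge_iff o e _).2 (Or.inl rfl))
    ((mem_edge_iff o f _).2 (Or.inl hh))
  have h12 : o.head e ≠ o.tail f := fun hh => h' _ ((mem_edge_iff o e _).2 (Or.inl rfl))
    ((mem_edge_iff o f _).2 (Or.inr hh))
  have h21 : o.tail e ≠ o.head f := fun hh => h' _ ((mem_edge_iff o e _).2 (Or.inr rfl))
    ((mem_edge_iff o f _).2 (Or.inl hh))
  have h22 : o.tail e ≠ o.tail f := fun hh => h' _ ((mem_edge_iff o e _).2 (Or.inr rfl))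
    ((mem_edge_iff o f _).2 (Or.inr hh))
  have hete := head_ne_tail o e
  have hftf := head_ne_tail o f
  obtain ⟨he1, he2⟩ := (edgeInTri_iff o e t).1 he
  obtain ⟨hf1, hf2⟩ := (edgeInTri_iff o f t).1 hf
  rcases mem_tri_cases τ t he1 with h1|h1|h1 <;> rcases mem_tri_cases τ t he2 with h2|h2|h2 <;>
    rcases mem_tri_cases τ t hf1 with h3|h3|h3 <;> rcases mem_tri_cases τ t hf2 with h4|h4|h4 <;>
    simp_all

lemma helm_eq_zero_of_noshare (e f : G.edgeSet)
    (h : ¬∃ v : V, v ∈ (e : Sym2 V) ∧ v ∈ (f : Sym2 V)) :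
    helm G o τ e f = 0 := by
  rw [helm_apply]
  have hb1 : bMat G o f (o.head e) = 0 := by
    have h1 : o.head e ≠ o.head f := fun hh => h ⟨_, (mem_edge_iff o e _).2 (Or.inl rfl),
      (mem_edge_iff o f _).2 (Or.inl hh)⟩
    have h2 : o.head e ≠ o.tail f := fun hh => h ⟨_, (mem_edge_iff o e _).2 (Or.inl rfl),
      (mem_edge_iff o f _).2 (Or.inr hh)⟩
    simp [bMat, h1, h2]
  have hb2 : bMat G o f (o.tail e) = 0 := by
    have h1 : o.tail e ≠ o.head f := fun hh => h ⟨_, (mem_edge_iff o e _).2 (Or.inr rfl),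
      (mem_edge_iff o f _).2 (Or.inl hh)⟩
    have h2 : o.tail e ≠ o.tail f := fun hh => h ⟨_, (mem_edge_iff o e _).2 (Or.inr rfl),
      (mem_edge_iff o f _).2 (Or.inr hh)⟩
    simp [bMat, h1, h2]
  have hsum : ∑ t : Triangle G, cMat G o τ t e * cMat G o τ t f = 0 := by
    apply Finset.sum_eq_zero
    intro t _
    by_contra hterm
    have h1 : cMat G o τ t e ≠ 0 := fun hh => hterm (by rw [hh]; ring)
    have h2 : cMat G o τ t f ≠ 0 := fun hh => hterm (by rw [hh]; ring)
    exact no_common_of_noshare o τ e f h t (edgeInTri_of_cMat_ne o τ e t h1)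
      (edgeInTri_of_cMat_ne o τ f t h2)
  rw [hb1, hb2, hsum]
  ring

lemma helm_ne_zero (e f : G.edgeSet) (hef : e ≠ f)
    (hsh : ∃ v : V, v ∈ (e : Sym2 V) ∧ v ∈ (f : Sym2 V))
    (hnc : ¬∃ t : Triangle G, EdgeInTri G (e : Sym2 V) t ∧ EdgeInTri G (f : Sym2 V) t) :
    helm G o τ e f ≠ 0 := by
  rw [helm_apply]
  have hsum : ∑ t : Triangle G, cMat G o τ t e * cMat G o τ t f = 0 := by
    apply Finset.sum_eq_zero
    intro t _
    by_contra hterm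
    have h1 : cMat G o τ t e ≠ 0 := fun hh => hterm (by rw [hh]; ring)
    have h2 : cMat G o τ t f ≠ 0 := fun hh => hterm (by rw [hh]; ring)
    exact hnc ⟨t, edgeInTri_of_cMat_ne o τ e t h1, edgeInTri_of_cMat_ne o τ f t h2⟩
  rw [hsum, add_zero]
  have hete := head_ne_tail o e
  have hftf := head_ne_tail o f
  have hne := sym2_ne o e f hef
  obtain ⟨v, hv1, hv2⟩ := hsh
  rw [mem_edge_iff o] at hv1 hv2
  rcases hv1 with rfl|rfl <;> rcases hv2 with h|h
  · have h2 : o.tail e ≠ o.head f := fun hh => hete (h.trans hh.symm)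
    have h3 : o.tail e ≠ o.tail f := fun hh => hne (by rw [h, hh])
    simp [bMat, h, h2, h3]
  · have h2 : o.head e ≠ o.head f := fun hh => hftf (hh.symm.trans h)
    have h3 : o.tail e ≠ o.head f := fun hh => hne (by rw [h, hh]; exact Sym2.eq_swap)
    have h4 : o.tail e ≠ o.tail f := fun hh => hete (h.trans hh.symm)
    simp [bMat, h, h2, h3, h4, hftf.symm]
  · have h2 : o.head e ≠ o.head f := fun hh => hete (hh.trans h.symm)
    have h3 : o.head e ≠ o.tail f := fun hh => hne (by rw [hh, h]; exact Sym2.eq_swap)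
    simp [bMat, h, h2, h3]
  · have h2 : o.head e ≠ o.head f := fun hh => hne (by rw [hh, h])
    have h3 : o.head e ≠ o.tail f := fun hh => hete (hh.trans h.symm)
    simp [bMat, h, h2, h3, hftf.symm]

lemma helm_zero_iff (e f : G.edgeSet) (hef : e ≠ f) :
    helm G o τ e f = 0 ↔
      ((∃ t : Triangle G, EdgeInTri G (e : Sym2 V) t ∧ EdgeInTri G (f : Sym2 V) t) ∨
       ¬∃ v : V, v ∈ (e : Sym2 V) ∧ v ∈ (f : Sym2 V)) := by
  constructor
  · intro h
    by_contra hcon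
    rw [not_or, not_not] at hcon
    exact helm_ne_zero o τ e f hef hcon.2 hcon.1 h
  · rintro (⟨t, he, hf⟩ | h)
    · exact helm_eq_zero_of_common o τ e f hef t he hf
    · exact helm_eq_zero_of_noshare o τ e f h

lemma helm_symm (e f : G.edgeSet) : helm G o τ e f = helm G o τ f e := by
  have h : (helm G o τ)ᵀ = helm G o τ := by
    rw [helm, Matrix.transpose_add, Matrix.transpose_mul, Matrix.transpose_mul,
      Matrix.transpose_transpose, Matrix.transpose_transpose]
  conv_rhs => rw [← h]
  rfl

end Lemmas3

section Red
variable {α : Type} [Fintype α] [DecidableEq α]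

lemma matReducible_iff (M : Matrix α α ℝ) :
    MatReducible M ↔ ∃ S : Set α, S.Nonempty ∧ Sᶜ.Nonempty ∧
      ∀ a ∈ S, ∀ b ∈ Sᶜ, M a b = 0 ∧ M b a = 0 := by
  constructor
  · rintro ⟨p, q, hp, hq, σ, A, D, hM⟩
    refine ⟨{a | (σ a).isLeft}, ⟨σ.symm (Sum.inl ⟨0, hp⟩), by simp⟩,
      ⟨σ.symm (Sum.inr ⟨0, hq⟩), by simp⟩, ?_⟩
    intro a ha b hb
    simp only [Set.mem_setOf_eq, Set.mem_compl_iff] at ha hb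
    obtain ⟨i, hi⟩ := Sum.isLeft_iff.1 ha
    obtain ⟨j, hj⟩ := Sum.isRight_iff.1 (Sum.not_isLeft.1 hb)
    have ha' : a = σ.symm (Sum.inl i) := by rw [← hi, Equiv.symm_apply_apply]
    have hb' : b = σ.symm (Sum.inr j) := by rw [← hj, Equiv.symm_apply_apply]
    rw [ha', hb']
    constructor
    · have := congrFun (congrFun hM (Sum.inl i)) (Sum.inr j)
      simpa [Matrix.reindex_apply, Matrix.submatrix_apply] using this
    · have := congrFun (congrFun hM (Sum.inr j)) (Sum.inl i)
      simpa [Matrix.reindex_apply, Matrix.submatrix_apply] using this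
  · rintro ⟨S, hS1, hS2, hz⟩
    haveI : Fintype ↥S := Set.Finite.fintype (Set.toFinite _)
    haveI : Fintype ↥(Sᶜ) := Set.Finite.fintype (Set.toFinite _)
    refine ⟨Fintype.card ↥S, Fintype.card ↥(Sᶜ), Fintype.card_pos_iff.2 hS1.to_subtype,
      Fintype.card_pos_iff.2 hS2.to_subtype, ?_⟩
    set σ : α ≃ (Fin (Fintype.card ↥S) ⊕ Fin (Fintype.card ↥(Sᶜ))) :=
      (Equiv.Set.sumCompl S).symm.trans
        (Equiv.sumCongr (Fintype.equivFin ↥S) (Fintype.equivFin ↥(Sᶜ))) with hσ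
    have hmemL : ∀ i, σ.symm (Sum.inl i) ∈ S := by
      intro i
      simp only [hσ, Equiv.symm_trans_apply, Equiv.symm_symm, Equiv.sumCongr_symm,
        Equiv.sumCongr_apply, Sum.map_inl]
      exact (Equiv.Set.sumCompl_apply_inl S _)  ▸ ((Fintype.equivFin ↥S).symm i).2
    have hmemR : ∀ j, σ.symm (Sum.inr j) ∈ Sᶜ := by
      intro j
      simp only [hσ, Equiv.symm_trans_apply, Equiv.symm_symm, Equiv.sumCongr_symm,
        Equiv.sumCongr_apply, Sum.map_inr]
      exact (Equiv.Set.sumCompl_apply_inr S _) ▸ ((Fintype.equivFin ↥(Sᶜ)).symm j).2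
    refine ⟨σ, fun i j => M (σ.symm (Sum.inl i)) (σ.symm (Sum.inl j)),
      fun i j => M (σ.symm (Sum.inr i)) (σ.symm (Sum.inr j)), ?_⟩
    ext x y
    cases x with
    | inl i =>
      cases y with
      | inl j => simp [Matrix.reindex_apply, Matrix.submatrix_apply, Matrix.fromBlocks_apply₁₁]; rfl
      | inr j =>
        simp only [Matrix.reindex_apply, Matrix.submatrix_apply, Matrix.fromBlocks_apply₁₂,
          Matrix.zero_apply]
        exact (hz _ (hmemL i) _ (hmemR j)).1
    | inr i =>
      cases y with
      | inl j =>
        simp only [Matrix.reindex_apply, Matrix.submatrix_apply, Matrix.fromBlocks_apply₂₁,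
          Matrix.zero_apply]
        exact (hz _ (hmemL j) _ (hmemR i)).2
      | inr j => simp [Matrix.reindex_apply, Matrix.submatrix_apply, Matrix.fromBlocks_apply₂₂]; rfl

end Red

/-- `H(G)` is reducible if and only if the edge set of `G` can be
partitioned into two non-empty parts `E₁, E₂` such that every pair `e₁ ∈ E₁`, `e₂ ∈ E₂`
either lies in a common triangle of `G` or shares no endpoint. -/
theorem statement8 (G : SimpleGraph V) (o : Orientation G) (τ : TriOrientation G) :
    MatReducible (helm G o τ) ↔
      ∃ E₁ E₂ : Set G.edgeSet, E₁.Nonempty ∧ E₂.Nonempty ∧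
        E₁ ∪ E₂ = Set.univ ∧ Disjoint E₁ E₂ ∧
        ∀ e₁ ∈ E₁, ∀ e₂ ∈ E₂,
          (∃ t : Triangle G, EdgeInTri G (e₁ : Sym2 V) t ∧ EdgeInTri G (e₂ : Sym2 V) t) ∨
          ¬∃ v : V, v ∈ (e₁ : Sym2 V) ∧ v ∈ (e₂ : Sym2 V) := by
  rw [matReducible_iff]
  constructor
  · rintro ⟨S, hS1, hS2, hz⟩
    refine ⟨S, Sᶜ, hS1, hS2, Set.union_compl_self S, disjoint_compl_right, ?_⟩
    intro e₁ h₁ e₂ h₂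
    have hef : e₁ ≠ e₂ := fun h => h₂ (h ▸ h₁)
    exact (helm_zero_iff o τ e₁ e₂ hef).1 (hz e₁ h₁ e₂ h₂).1
  · rintro ⟨E₁, E₂, h1, h2, hun, hdis, hcond⟩
    have hcompl : E₁ᶜ = E₂ := by
      ext a
      simp only [Set.mem_compl_iff]
      constructor
      · intro ha
        rcases (Set.eq_univ_iff_forall.1 hun a) with h | h
        · exact absurd h ha
        · exact h
      · intro ha hb
        exact Set.disjoint_left.1 hdis hb ha
    refine ⟨E₁, h1, hcompl ▸ h2, ?_⟩
    intro a ha b hb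
    rw [hcompl] at hb
    have hab : a ≠ b := fun h => Set.disjoint_left.1 hdis ha (h ▸ hb)
    exact ⟨(helm_zero_iff o τ a b hab).2 (hcond a ha b hb),
      (helm_symm o τ a b) ▸ (helm_zero_iff o τ a b hab).2 (hcond a ha b hb)⟩

end HelmPaper
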